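/- If G is a multigraph (with at least one vertex) and U is its underlying simple graph, then for every m, the minimum number of colorings over full m-fold covers satisfies P_DP(G,m) ≤ P_DP(U,m). -/

import Mathlib

/-- A finite-multiplicity loopless multigraph on vertex set `V`:
`mult u v` is the number of parallel edges joining `u` and `v`. -/
structure Multigraph (V : Type) where
  mult : V → V → ℕ
  symm : ∀ u v, mult u v = mult v u
  loopless : ∀ v, mult v v = 0

/-- A full `m`-fold cover of a multigraph `G`.  The list of a vertex `u` is
identified with `{u} × Fin m`; for each ordered pair `(u,v)` and each edge index
`i` (only indices `i < G.mult u v` are relevant) the corresponding perfect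
matching between the two lists is recorded as a permutation of `Fin m`, the two
orientations of an edge giving inverse permutations. -/
structure FullCover {V : Type} (G : Multigraph V) (m : ℕ) where
  perm : V → V → ℕ → (Fin m ≃ Fin m)
  compat : ∀ u v i, perm v u i = (perm u v i).symm

/-- `f` (choosing one list element per vertex) is an `H`-coloring: it avoids all
cross edges of the cover. -/
def FullCover.IsColoring {V : Type} {G : Multigraph V} {m : ℕ}
    (c : FullCover G m) (f : V → Fin m) : Prop :=
  ∀ u v i, i < G.mult u v → (c.perm u v i) (f u) ≠ f v

/-- The number of `H`-colorings of `G` for the cover `c`. -/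
noncomputable def FullCover.numColorings {V : Type} {G : Multigraph V} {m : ℕ}
    (c : FullCover G m) : ℕ :=
  Nat.card {f : V → Fin m // c.IsColoring f}

/-- The DP color function: the minimum number of colorings over all full
`m`-fold covers. -/
noncomputable def Multigraph.PDP {V : Type} (G : Multigraph V) (m : ℕ) : ℕ :=
  sInf {n | ∃ c : FullCover G m, n = c.numColorings}

/-- The dual DP color function: the maximum number of colorings over all full
`m`-fold covers. -/
noncomputable def Multigraph.PDPdual {V : Type} (G : Multigraph V) (m : ℕ) : ℕ :=
  sSup {n | ∃ c : FullCover G m, n = c.numColorings}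

/-- The number of proper `m`-colorings of (the underlying graph of) `G`. -/
noncomputable def Multigraph.properCount {V : Type} (G : Multigraph V) (m : ℕ) : ℕ :=
  Nat.card {f : V → Fin m // ∀ u v, 0 < G.mult u v → f u ≠ f v}

/-- The underlying simple graph of a multigraph, viewed as a multigraph:
all parallel edges are merged into a single edge. -/
def Multigraph.underlying {V : Type} (G : Multigraph V) : Multigraph V where
  mult u v := min (G.mult u v) 1
  symm := by intro u v; (try dsimp only); rw [G.symm]
  loopless := by intro v; simp [G.loopless]

/-- The DP color function of a multigraph is at most the DP color function of
its underlying simple graph. -/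
theorem PDP_le_PDP_underlying {V : Type} [Fintype V] [Nonempty V]
    (G : Multigraph V) (m : ℕ) :
    G.PDP m ≤ G.underlying.PDP m := by
  -- The set of coloring-counts for the underlying graph is nonempty.
  have hne : {n | ∃ c : FullCover G.underlying m, n = c.numColorings}.Nonempty := by
    exact ⟨(⟨fun _ _ _ => 1, fun _ _ _ => rfl⟩ : FullCover G.underlying m).numColorings,
      ⟨_, rfl⟩⟩
  obtain ⟨c, hc⟩ := Nat.sInf_mem hne
  -- Build a cover of G from c: every parallel edge uses c's matching for index 0.
  set c' : FullCover G m :=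
    ⟨fun u v _ => c.perm u v 0, fun u v _ => c.compat u v 0⟩ with hc'
  have hcol : ∀ f : V → Fin m, c'.IsColoring f ↔ c.IsColoring f := by
    intro f
    constructor
    · intro h u v i hi
      have hi' : i < min (G.mult u v) 1 := hi
      have hm : 0 < G.mult u v := by omega
      have hi0 : i = 0 := by omega
      subst hi0
      exact h u v 0 hm
    · intro h u v i hi
      have : (0 : ℕ) < min (G.mult u v) 1 := by omega
      exact h u v 0 this
  have heq : c'.numColorings = c.numColorings := by
    unfold FullCover.numColorings
    congr 1
    exact congrArg _ (funext fun f => propext (hcol f))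
  have : G.PDP m ≤ c'.numColorings := Nat.sInf_le ⟨c', rfl⟩
  rw [heq, ← hc] at this
  exact this
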